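/- arXiv:1204.4423 — 2 statements merged into one kernel-verified Lean document; each statement's English description precedes it below -/
import Mathlib

section
/- Let P = (m,E,R) be a pattern of k-multisets and let s ∈ ℕ ∪ {∞}. If a k-graph G is F_s-free, then every blow-up of G is F_s-free. -/
open Filter Finset

/-! ### Basic `k`-graph framework.

A `k`-graph is represented by a vertex set `V : Finset ℕ` together with an edge set
`G : Finset (Finset ℕ)`; `EdgesUniform k V G` says that all edges are `k`-subsets of `V`. -/

/-- All edges of `G` are `k`-element subsets of the vertex set `V`. -/
def EdgesUniform (k : ℕ) (V : Finset ℕ) (G : Finset (Finset ℕ)) : Prop :=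
  ∀ e ∈ G, e ⊆ V ∧ e.card = k

/-- The hypergraph `(V₁, G₁)` embeds into `(V₂, G₂)`: an injection of vertices mapping
edges to edges.  Equivalently, `(V₁, G₁)` is (isomorphic to) a subgraph of `(V₂, G₂)`. -/
def Embeds (V₁ : Finset ℕ) (G₁ : Finset (Finset ℕ)) (V₂ : Finset ℕ)
    (G₂ : Finset (Finset ℕ)) : Prop :=
  ∃ f : ℕ → ℕ, Set.InjOn f V₁ ∧ (∀ v ∈ V₁, f v ∈ V₂) ∧ ∀ e ∈ G₁, e.image f ∈ G₂

/-- `(V, G)` contains no member of the family `𝓕` as a subgraph. -/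
def IsFree (𝓕 : Set (Finset ℕ × Finset (Finset ℕ))) (V : Finset ℕ)
    (G : Finset (Finset ℕ)) : Prop :=
  ∀ F ∈ 𝓕, ¬ Embeds F.1 F.2 V G

/-- The Turán function `ex(n, 𝓕)`: the maximum number of edges of an `𝓕`-free
`k`-graph on `n` vertices. -/
noncomputable def exNum (k : ℕ) (𝓕 : Set (Finset ℕ × Finset (Finset ℕ))) (n : ℕ) : ℕ :=
  sSup {c | ∃ V G, V.card = n ∧ EdgesUniform k V G ∧ IsFree 𝓕 V G ∧ G.card = c}

/-- `Π^(k)_∞`: the set of Turán densities of arbitrary (possibly infinite) families of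
`k`-graphs.  (The limit of `ex(n,𝓕)/C(n,k)` always exists, so membership is expressed
via `Tendsto`.) -/
def turanDensitySet (k : ℕ) : Set ℝ :=
  {x | ∃ 𝓕 : Set (Finset ℕ × Finset (Finset ℕ)),
        (∀ F ∈ 𝓕, EdgesUniform k F.1 F.2) ∧
        Tendsto (fun n => (exNum k 𝓕 n : ℝ) / (n.choose k : ℝ)) atTop (nhds x)}

/-- `Π^(k)_fin`: the set of Turán densities of finite families of `k`-graphs. -/
def finTuranDensitySet (k : ℕ) : Set ℝ :=
  {x | ∃ 𝓕 : Set (Finset ℕ × Finset (Finset ℕ)), 𝓕.Finite ∧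
        (∀ F ∈ 𝓕, EdgesUniform k F.1 F.2) ∧
        Tendsto (fun n => (exNum k 𝓕 n : ℝ) / (n.choose k : ℝ)) atTop (nhds x)}

/-! ### Blow-ups (vertex cloning and deletion). -/

/-- One blow-up step: either clone an existing vertex `x` into a new vertex `y`
(whose link equals the link of `x`), or delete a vertex together with all edges
through it. -/
inductive BlowupStep : Finset ℕ × Finset (Finset ℕ) → Finset ℕ × Finset (Finset ℕ) → Prop where
  | clone (V : Finset ℕ) (G : Finset (Finset ℕ)) (x y : ℕ) (hx : x ∈ V) (hy : y ∉ V) :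
      BlowupStep (V, G)
        (insert y V, G ∪ (G.filter fun e => x ∈ e).image fun e => insert y (e.erase x))
  | delete (V : Finset ℕ) (G : Finset (Finset ℕ)) (x : ℕ) (hx : x ∈ V) :
      BlowupStep (V, G) (V.erase x, G.filter fun e => x ∉ e)

/-- `(W, K)` is a blow-up of `(V, G)`: it is obtained from `(V, G)` by a finite
sequence of vertex clonings and vertex deletions. -/
def IsBlowupOf (W : Finset ℕ) (K : Finset (Finset ℕ)) (V : Finset ℕ)
    (G : Finset (Finset ℕ)) : Prop :=
  Relation.ReflTransGen BlowupStep (V, G) (W, K)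

/-- The blow-up closure `cl(𝓕)` of a family `𝓕` of `k`-graphs: all `k`-graphs some
blow-up of which is not `𝓕`-free. -/
def blowupClosure (k : ℕ) (𝓕 : Set (Finset ℕ × Finset (Finset ℕ))) :
    Set (Finset ℕ × Finset (Finset ℕ)) :=
  {H | EdgesUniform k H.1 H.2 ∧ ∃ W K, IsBlowupOf W K H.1 H.2 ∧ ¬ IsFree 𝓕 W K}

/-! ### Patterns and `P`-constructions. -/

/-- A pattern `P = (m, E, R)`: a finite index type (playing the role of `[m]`),
a collection `E` of `k`-multisets of indices, and a set `R` of recursive indices. -/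
structure Pattern (k : ℕ) where
  ι : Type
  [fin : Fintype ι]
  [dec : DecidableEq ι]
  E : Finset (Multiset ι)
  E_card : ∀ D ∈ E, Multiset.card D = k
  R : Finset ι

attribute [instance] Pattern.fin Pattern.dec

variable {k : ℕ}

/-- The profile of a vertex set `X` with respect to the parts `part i`: the multiset
recording each index `i` with multiplicity `|X ∩ part i|`. -/
def profileOf (P : Pattern k) (part : P.ι → Finset ℕ) (X : Finset ℕ) : Multiset P.ι :=
  ∑ i : P.ι, Multiset.replicate ((X ∩ part i).card) i

/-- The blow-up `E((V_1, …, V_m))` of the pattern `P` with respect to the parts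
`part` partitioning `V`: all `k`-subsets of `V` whose profile lies in `P.E`. -/
def blowupEdges (P : Pattern k) (part : P.ι → Finset ℕ) (V : Finset ℕ) :
    Finset (Finset ℕ) :=
  V.powerset.filter fun X => X.card = k ∧ profileOf P part X ∈ P.E

/-- `P`-constructions on a vertex set `V`: either the empty `k`-graph on `V`, or
choose a partition of `V` into parts (with no recursive part equal to all of `V`),
take all blow-up edges, and place an arbitrary `P`-construction inside each
recursive part. -/
inductive IsPConstruction (P : Pattern k) : Finset ℕ → Finset (Finset ℕ) → Prop where
  | empty (V : Finset ℕ) : IsPConstruction P V ∅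
  | step (V : Finset ℕ) (part : P.ι → Finset ℕ) (inner : P.ι → Finset (Finset ℕ))
      (hcov : Finset.univ.biUnion part = V)
      (hdis : ∀ i j : P.ι, i ≠ j → Disjoint (part i) (part j))
      (hne : ∀ i ∈ P.R, part i ≠ V)
      (hrec : ∀ i ∈ P.R, IsPConstruction P (part i) (inner i))
      (h0 : ∀ i ∉ P.R, inner i = ∅) :
      IsPConstruction P V (blowupEdges P part V ∪ Finset.univ.biUnion inner)

/-- `p_n`: the maximum number of edges of a `P`-construction on `n` vertices. -/
noncomputable def pNum (P : Pattern k) (n : ℕ) : ℕ :=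
  sSup {c | ∃ V G, V.card = n ∧ IsPConstruction P V G ∧ G.card = c}

/-- The Lagrangian `Λ_P = lim_{n→∞} p_n / C(n,k)` (expressed via `limsup`, which
equals the limit since the limit exists). -/
noncomputable def patternLagrangian (P : Pattern k) : ℝ :=
  limsup (fun n => (pNum P n : ℝ) / (n.choose k : ℝ)) atTop

/-- The pattern `P − i`, obtained by removing the index `i`: delete `i` from `R` and
delete from `E` all multisets containing `i` (the remaining indices form the subtype
`{j // j ≠ i}`). -/
def Pattern.remove (P : Pattern k) (i : P.ι) : Pattern k where
  ι := {j : P.ι // j ≠ i}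
  fin := inferInstance
  dec := inferInstance
  E := ((P.E.filter fun D => i ∉ D).image fun D =>
          D.filterMap fun j =>
            if h : j ≠ i then some (⟨j, h⟩ : {j : P.ι // j ≠ i}) else none).filter
        fun D => Multiset.card D = k
  E_card := fun D hD => (Finset.mem_filter.mp hD).2
  R := P.R.subtype fun j => j ≠ i

/-- `P` is minimal if removing any index strictly decreases the Lagrangian. -/
def Pattern.Minimal (P : Pattern k) : Prop :=
  ∀ i : P.ι, patternLagrangian (P.remove i) < patternLagrangian P

/-- `P` is proper if it is minimal and `0 < Λ_P < 1`. -/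
def Pattern.Proper (P : Pattern k) : Prop :=
  P.Minimal ∧ 0 < patternLagrangian P ∧ patternLagrangian P < 1

/-- `𝓕_∞`: the family of all `k`-graphs that embed into no `P`-construction. -/
def FamInf (P : Pattern k) : Set (Finset ℕ × Finset (Finset ℕ)) :=
  {F | EdgesUniform k F.1 F.2 ∧
    ∀ (W : Finset ℕ) (H : Finset (Finset ℕ)), IsPConstruction P W H → ¬ Embeds F.1 F.2 W H}

/-- `𝓕_s` for `s ∈ ℕ ∪ {∞}`: the members of `𝓕_∞` with at most `s` vertices. -/
def FamBdd (P : Pattern k) (s : ℕ∞) : Set (Finset ℕ × Finset (Finset ℕ)) :=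
  {F | F ∈ FamInf P ∧ (F.1.card : ℕ∞) ≤ s}

/-! ### Lagrange polynomial and optimal vectors. -/

/-- The Lagrange polynomial `λ_E(x) = k! Σ_{D ∈ E} Π_i x_i^{D(i)} / D(i)!`. -/
noncomputable def lagrangePoly (P : Pattern k) (x : P.ι → ℝ) : ℝ :=
  (Nat.factorial k : ℝ) *
    ∑ D ∈ P.E, ∏ i : P.ι, x i ^ D.count i / (Nat.factorial (D.count i) : ℝ)

/-- The function `f(x) = λ_E(x) + Λ_P · Σ_{i ∈ R} x_i^k`. -/
noncomputable def patternAux (P : Pattern k) (x : P.ι → ℝ) : ℝ :=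
  lagrangePoly P x + patternLagrangian P * ∑ i ∈ P.R, x i ^ k

/-- An optimal vector: a point of `Δ_m^*` (the simplex with no coordinate equal to 1)
satisfying `Λ_P = λ_E(x) + Λ_P Σ_{i∈R} x_i^k`. -/
def IsOptimalVec (P : Pattern k) (x : P.ι → ℝ) : Prop :=
  x ∈ stdSimplex ℝ P.ι ∧ (∀ i, x i < 1) ∧ patternLagrangian P = patternAux P x

/-- The link `E_i` of an index `i`: all multisets `A` with `i ::ₘ A ∈ E`. -/
def patternLink (P : Pattern k) (i : P.ι) : Set (Multiset P.ι) :=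
  {A | i ::ₘ A ∈ P.E}

/-! ### Bottom partitions, rigidity and closeness. -/

/-- `(V, G)` is a `P`-construction whose bottom partition is `part`. -/
def IsPConstructionWith (P : Pattern k) (V : Finset ℕ) (part : P.ι → Finset ℕ)
    (G : Finset (Finset ℕ)) : Prop :=
  Finset.univ.biUnion part = V ∧ (∀ i j : P.ι, i ≠ j → Disjoint (part i) (part j)) ∧
  (∀ i ∈ P.R, part i ≠ V) ∧
  ∃ inner : P.ι → Finset (Finset ℕ),
    (∀ i ∈ P.R, IsPConstruction P (part i) (inner i)) ∧ (∀ i ∉ P.R, inner i = ∅) ∧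
    G = blowupEdges P part V ∪ Finset.univ.biUnion inner

/-- An automorphism of the pattern `P`: a permutation of indices preserving `R` and `E`. -/
def IsPatternAutomorphism (P : Pattern k) (h : Equiv.Perm P.ι) : Prop :=
  P.R.image h = P.R ∧ P.E.image (Multiset.map h) = P.E

/-- The `P`-construction `(V, G)` with bottom partition `part` is rigid: any embedding
`f` into a `P`-construction `(W, H)` with bottom partition `upart`, whose image meets
at least two distinct parts `upart i`, follows some automorphism of `P` on whole parts. -/
def RigidConstruction (P : Pattern k) (V : Finset ℕ) (part : P.ι → Finset ℕ)
    (G : Finset (Finset ℕ)) : Prop :=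
  ∀ (W : Finset ℕ) (H : Finset (Finset ℕ)) (upart : P.ι → Finset ℕ),
    IsPConstructionWith P W upart H →
    ∀ f : ℕ → ℕ,
      Set.InjOn f V → (∀ v ∈ V, f v ∈ W) → (∀ e ∈ G, e.image f ∈ H) →
      (∃ i j : P.ι, i ≠ j ∧ (∃ u ∈ V, f u ∈ upart i) ∧ ∃ v ∈ V, f v ∈ upart j) →
      ∃ h : Equiv.Perm P.ι, IsPatternAutomorphism P h ∧
        ∀ i : P.ι, ∀ v ∈ part i, f v ∈ upart (h i)

/-- `(V, G)` is `s`-close to some `P`-construction: after relabelling the vertices of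
`G` by an injection, some `P`-construction on the same vertex set differs from it in
at most `s` edges. -/
def CloseToPConstruction (P : Pattern k) (s : ℝ) (V : Finset ℕ)
    (G : Finset (Finset ℕ)) : Prop :=
  ∃ (V' : Finset ℕ) (G' : Finset (Finset ℕ)) (f : ℕ → ℕ),
    IsPConstruction P V' G' ∧ Set.InjOn f V ∧ V.image f = V' ∧
    ((symmDiff (G.image fun e => e.image f) G').card : ℝ) ≤ s

/-! ### Auxiliary lemmas for Statement 8. -/

lemma profileOf_eq_of_card {P : Pattern k} {part part' : P.ι → Finset ℕ} {X X' : Finset ℕ}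
    (h : ∀ i, (X ∩ part i).card = (X' ∩ part' i).card) :
    profileOf P part X = profileOf P part' X' := by
  unfold profileOf
  exact Finset.sum_congr rfl fun i _ => by rw [h i]

lemma pcon_edge_subset {P : Pattern k} {V : Finset ℕ} {G : Finset (Finset ℕ)}
    (h : IsPConstruction P V G) : ∀ e ∈ G, e ⊆ V ∧ e.card = k := by
  induction h with
  | empty V => simp
  | step V part inner hcov hdis hne hrec h0 ih =>
    intro e he
    rcases Finset.mem_union.mp he with h1 | h1
    · rw [blowupEdges, Finset.mem_filter, Finset.mem_powerset] at h1
      exact ⟨h1.1, h1.2.1⟩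
    · rcases Finset.mem_biUnion.mp h1 with ⟨i, _, hi⟩
      by_cases hiR : i ∈ P.R
      · obtain ⟨h2, h3⟩ := ih i hiR e hi
        exact ⟨h2.trans (hcov ▸ Finset.subset_biUnion_of_mem part (Finset.mem_univ i)), h3⟩
      · rw [h0 i hiR] at hi; simp at hi

/-- Cloning a vertex of a `P`-construction yields a subgraph of a `P`-construction. -/
lemma pcon_clone (P : Pattern k) (x y : ℕ) :
    ∀ {U : Finset ℕ} {H : Finset (Finset ℕ)}, IsPConstruction P U H → x ∈ U → y ∉ U →
    ∃ H₂, IsPConstruction P (insert y U) H₂ ∧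
      H ∪ ((H.filter fun e => x ∈ e).image fun e => insert y (e.erase x)) ⊆ H₂ := by
  intro U H hH
  induction hH with
  | empty V =>
    intro _ _
    exact ⟨∅, IsPConstruction.empty _, by simp⟩
  | step V part inner hcov hdis hne hrec h0 ih =>
    intro hx hyV
    rw [← hcov] at hx
    obtain ⟨i₀, -, hxi⟩ := Finset.mem_biUnion.mp hx
    have hysub : ∀ i, y ∉ part i := fun i h' =>
      hyV (hcov ▸ Finset.mem_biUnion.mpr ⟨i, Finset.mem_univ i, h'⟩)
    have hxnot : ∀ i, i ≠ i₀ → x ∉ part i := fun i hii h' =>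
      (Finset.disjoint_left.mp (hdis i i₀ hii)) h' hxi
    set part' := Function.update part i₀ (insert y (part i₀)) with hpart'def
    have hpart'₀ : part' i₀ = insert y (part i₀) := Function.update_self _ _ _
    have hpart'ne : ∀ i, i ≠ i₀ → part' i = part i := fun i h => Function.update_of_ne h _ _
    have hmem' : ∀ i a, a ∈ part' i → (a = y ∧ i = i₀) ∨ a ∈ part i := by
      intro i a ha
      by_cases h : i = i₀
      · subst h; rw [hpart'₀] at ha
        rcases Finset.mem_insert.mp ha with rfl | h'
        · exact Or.inl ⟨rfl, rfl⟩
        · exact Or.inr h'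
      · rw [hpart'ne i h] at ha; exact Or.inr ha
    obtain ⟨inner', hrec', h0', hmono, hclone⟩ :
        ∃ inner' : P.ι → Finset (Finset ℕ),
          (∀ i ∈ P.R, IsPConstruction P (part' i) (inner' i)) ∧
          (∀ i ∉ P.R, inner' i = ∅) ∧ (∀ i, inner i ⊆ inner' i) ∧
          (∀ e ∈ inner i₀, x ∈ e → insert y (e.erase x) ∈ inner' i₀) := by
      by_cases hiR : i₀ ∈ P.R
      · obtain ⟨I₂, hI₂, hIsub⟩ := ih i₀ hiR hxi (hysub i₀)
        refine ⟨Function.update inner i₀ I₂, ?_, ?_, ?_, ?_⟩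
        · intro i hi
          by_cases h : i = i₀
          · subst h; rw [hpart'₀, Function.update_self]; exact hI₂
          · rw [hpart'ne i h, Function.update_of_ne h]; exact hrec i hi
        · intro i hi
          rw [Function.update_of_ne (fun hEq => hi (by rw [hEq]; exact hiR))]; exact h0 i hi
        · intro i
          by_cases h : i = i₀
          · subst h; rw [Function.update_self]
            exact fun e he => hIsub (Finset.mem_union_left _ he)
          · rw [Function.update_of_ne h]
        · intro e he hxe
          rw [Function.update_self]
          exact hIsub (Finset.mem_union_right _
            (Finset.mem_image_of_mem _ (Finset.mem_filter.mpr ⟨he, hxe⟩)))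
      · refine ⟨inner, ?_, h0, fun i => Finset.Subset.refl _, ?_⟩
        · intro i hi
          have h : i ≠ i₀ := fun h => hiR (h ▸ hi)
          rw [hpart'ne i h]; exact hrec i hi
        · intro e he
          rw [h0 i₀ hiR] at he; exact absurd he (Finset.notMem_empty e)
    have hcov' : Finset.univ.biUnion part' = insert y V := by
      ext a
      simp only [Finset.mem_biUnion, Finset.mem_univ, true_and, Finset.mem_insert]
      constructor
      · rintro ⟨i, hi⟩
        rcases hmem' i a hi with ⟨rfl, rfl⟩ | h
        · exact Or.inl rfl
        · exact Or.inr (hcov ▸ Finset.mem_biUnion.mpr ⟨i, Finset.mem_univ i, h⟩)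
      · rintro (rfl | ha)
        · exact ⟨i₀, by rw [hpart'₀]; exact Finset.mem_insert_self _ _⟩
        · rw [← hcov] at ha
          obtain ⟨i, -, hi⟩ := Finset.mem_biUnion.mp ha
          by_cases h : i = i₀
          · exact ⟨i₀, by rw [hpart'₀]; exact Finset.mem_insert_of_mem (h ▸ hi)⟩
          · exact ⟨i, by rw [hpart'ne i h]; exact hi⟩
    have hdis' : ∀ i j : P.ι, i ≠ j → Disjoint (part' i) (part' j) := by
      intro i j hij
      rw [Finset.disjoint_left]
      intro a hai haj
      rcases hmem' i a hai with ⟨rfl, rfl⟩ | h1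
      · rcases hmem' j a haj with ⟨-, rfl⟩ | h2
        · exact hij rfl
        · exact hysub j h2
      · rcases hmem' j a haj with ⟨rfl, rfl⟩ | h2
        · exact hysub i h1
        · exact (Finset.disjoint_left.mp (hdis i j hij)) h1 h2
    have hne' : ∀ i ∈ P.R, part' i ≠ insert y V := by
      intro i hi heq
      by_cases h : i = i₀
      · rw [h, hpart'₀] at heq
        have : part i₀ = V := by
          have h2 := congrArg (fun s => Finset.erase s y) heq
          simpa [Finset.erase_insert (hysub i₀), Finset.erase_insert hyV] using h2
        exact hne i₀ (h ▸ hi) this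
      · rw [hpart'ne i h] at heq
        have : y ∈ part i := by rw [heq]; exact Finset.mem_insert_self _ _
        exact hysub i this
    refine ⟨blowupEdges P part' (insert y V) ∪ Finset.univ.biUnion inner',
      IsPConstruction.step (insert y V) part' inner' hcov' hdis' hne' hrec' h0', ?_⟩
    intro E hE
    rcases Finset.mem_union.mp hE with hE | hE
    · rcases Finset.mem_union.mp hE with hE | hE
      · -- old blow-up edge
        rw [blowupEdges, Finset.mem_filter, Finset.mem_powerset] at hE
        obtain ⟨hEV, hEk, hEp⟩ := hE
        have hyE : y ∉ E := fun h => hyV (hEV h)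
        apply Finset.mem_union_left
        rw [blowupEdges, Finset.mem_filter, Finset.mem_powerset]
        refine ⟨hEV.trans (Finset.subset_insert _ _), hEk, ?_⟩
        have hp : profileOf P part' E = profileOf P part E := by
          apply profileOf_eq_of_card
          intro i
          by_cases h : i = i₀
          · rw [h, hpart'₀]
            congr 1
            ext a
            simp only [Finset.mem_inter, Finset.mem_insert]
            constructor
            · rintro ⟨ha, rfl | hp⟩
              · exact absurd ha hyE
              · exact ⟨ha, hp⟩
            · rintro ⟨ha, hp⟩; exact ⟨ha, Or.inr hp⟩
          · rw [hpart'ne i h]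
        rw [hp]; exact hEp
      · -- old inner edge
        obtain ⟨i, -, hi⟩ := Finset.mem_biUnion.mp hE
        exact Finset.mem_union_right _
          (Finset.mem_biUnion.mpr ⟨i, Finset.mem_univ _, hmono i hi⟩)
    · -- cloned edge
      obtain ⟨e0, he0, rfl⟩ := Finset.mem_image.mp hE
      rw [Finset.mem_filter] at he0
      obtain ⟨he0H, hxe0⟩ := he0
      rcases Finset.mem_union.mp he0H with h1 | h1
      · -- clone of a blow-up edge
        rw [blowupEdges, Finset.mem_filter, Finset.mem_powerset] at h1
        obtain ⟨hsV, hk0, hp0⟩ := h1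
        have hye0 : y ∉ e0 := fun h => hyV (hsV h)
        apply Finset.mem_union_left
        rw [blowupEdges, Finset.mem_filter, Finset.mem_powerset]
        refine ⟨?_, ?_, ?_⟩
        · intro a ha
          rcases Finset.mem_insert.mp ha with rfl | ha
          · exact Finset.mem_insert_self _ _
          · exact Finset.mem_insert_of_mem (hsV (Finset.mem_of_mem_erase ha))
        · rw [Finset.card_insert_of_notMem (fun h => hye0 (Finset.mem_of_mem_erase h)),
            Finset.card_erase_of_mem hxe0]
          have := Finset.card_pos.mpr ⟨x, hxe0⟩
          omega
        · have hp : profileOf P part' (insert y (e0.erase x)) = profileOf P part e0 := by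
            apply profileOf_eq_of_card
            intro i
            by_cases h : i = i₀
            · rw [h, hpart'₀]
              have hset : (insert y (e0.erase x)) ∩ insert y (part i₀) =
                  insert y ((e0 ∩ part i₀).erase x) := by
                ext a
                simp only [Finset.mem_inter, Finset.mem_insert, Finset.mem_erase]
                constructor
                · rintro ⟨rfl | ⟨hax, hae⟩, h2⟩
                  · exact Or.inl rfl
                  · rcases h2 with rfl | h2
                    · exact Or.inl rfl
                    · exact Or.inr ⟨hax, hae, h2⟩
                · rintro (rfl | ⟨hax, hae, hap⟩)
                  · exact ⟨Or.inl rfl, Or.inl rfl⟩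
                  · exact ⟨Or.inr ⟨hax, hae⟩, Or.inr hap⟩
              rw [hset]
              have hxS : x ∈ e0 ∩ part i₀ := Finset.mem_inter.mpr ⟨hxe0, hxi⟩
              have hyS : y ∉ (e0 ∩ part i₀).erase x := fun h =>
                hye0 (Finset.mem_inter.mp (Finset.mem_of_mem_erase h)).1
              rw [Finset.card_insert_of_notMem hyS, Finset.card_erase_of_mem hxS]
              have := Finset.card_pos.mpr ⟨x, hxS⟩
              omega
            · rw [hpart'ne i h]
              congr 1
              ext a
              simp only [Finset.mem_inter, Finset.mem_insert, Finset.mem_erase]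
              constructor
              · rintro ⟨rfl | ⟨hax, hae⟩, hap⟩
                · exact absurd hap (hysub i)
                · exact ⟨hae, hap⟩
              · rintro ⟨hae, hap⟩
                exact ⟨Or.inr ⟨fun h' => hxnot i h (h' ▸ hap), hae⟩, hap⟩
          rw [hp]; exact hp0
      · -- clone of an inner edge
        obtain ⟨i, -, hi⟩ := Finset.mem_biUnion.mp h1
        by_cases hiR2 : i ∈ P.R
        · have hsub0 := (pcon_edge_subset (hrec i hiR2) e0 hi).1
          have hii : i = i₀ := by
            by_contra h
            exact hxnot i h (hsub0 hxe0)
          subst hii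
          exact Finset.mem_union_right _
            (Finset.mem_biUnion.mpr ⟨i, Finset.mem_univ _, hclone e0 hi hxe0⟩)
        · rw [h0 i hiR2] at hi
          exact absurd hi (Finset.notMem_empty _)

lemma image_ite_self {S : Finset ℕ} {x y : ℕ} (h : y ∉ S) :
    S.image (fun w => if w = y then x else w) = S := by
  ext a
  simp only [Finset.mem_image]
  constructor
  · rintro ⟨b, hb, rfl⟩
    rw [if_neg (fun h' : b = y => h (h' ▸ hb))]
    exact hb
  · intro ha
    exact ⟨a, ha, if_neg (fun h' : a = y => h (h' ▸ ha))⟩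

/-- One blow-up step preserves uniformity and `𝓕_s`-freeness. -/
lemma step_preserve {k : ℕ} (P : Pattern k) (s : ℕ∞)
    {p q : Finset ℕ × Finset (Finset ℕ)} (hstep : BlowupStep p q)
    (hG : EdgesUniform k p.1 p.2) (hfree : IsFree (FamBdd P s) p.1 p.2) :
    EdgesUniform k q.1 q.2 ∧ IsFree (FamBdd P s) q.1 q.2 := by
  cases hstep with
  | delete V G x hx =>
    constructor
    · intro e he
      rw [Finset.mem_filter] at he
      obtain ⟨h1, h2⟩ := hG e he.1
      exact ⟨fun a ha => Finset.mem_erase.mpr ⟨fun h' => he.2 (h' ▸ ha), h1 ha⟩, h2⟩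
    · rintro F hF ⟨f, hinj, hmap, hedge⟩
      exact hfree F hF ⟨f, hinj, fun v hv => Finset.mem_of_mem_erase (hmap v hv),
        fun e he => (Finset.mem_filter.mp (hedge e he)).1⟩
  | clone V G x y hx hy =>
    have hxy : x ≠ y := fun h => hy (h ▸ hx)
    set π : ℕ → ℕ := fun w => if w = y then x else w with hπdef
    have key : ∀ E ∈ G ∪ (G.filter fun e => x ∈ e).image fun e => insert y (e.erase x),
        E.card = k ∧ E ⊆ insert y V ∧ ¬(x ∈ E ∧ y ∈ E) ∧ E.image π ∈ G := by
      intro E hE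
      rcases Finset.mem_union.mp hE with h1 | h1
      · obtain ⟨hs, hc⟩ := hG E h1
        have hyE : y ∉ E := fun h => hy (hs h)
        refine ⟨hc, fun a ha => Finset.mem_insert_of_mem (hs ha), fun h => hyE h.2, ?_⟩
        rw [image_ite_self hyE]; exact h1
      · obtain ⟨e0, he0, rfl⟩ := Finset.mem_image.mp h1
        rw [Finset.mem_filter] at he0
        obtain ⟨he0G, hxe0⟩ := he0
        obtain ⟨hs, hc⟩ := hG e0 he0G
        have hy0 : y ∉ e0.erase x := fun h => hy (hs (Finset.mem_of_mem_erase h))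
        have hxE : x ∉ insert y (e0.erase x) := by
          simp only [Finset.mem_insert, Finset.mem_erase]
          push_neg
          exact ⟨hxy, fun h => absurd rfl h⟩
        refine ⟨?_, ?_, fun h => hxE h.1, ?_⟩
        · rw [Finset.card_insert_of_notMem hy0, Finset.card_erase_of_mem hxe0]
          have := Finset.card_pos.mpr ⟨x, hxe0⟩
          omega
        · intro a ha
          rcases Finset.mem_insert.mp ha with rfl | ha
          · exact Finset.mem_insert_self _ _
          · exact Finset.mem_insert_of_mem (hs (Finset.mem_of_mem_erase ha))
        · rw [Finset.image_insert, image_ite_self hy0]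
          simp only [hπdef, if_pos rfl]
          rw [Finset.insert_erase hxe0]
          exact he0G
    constructor
    · exact fun e he => ⟨(key e he).2.1, (key e he).1⟩
    · rintro F hF ⟨f, hfinj, hfmap, hfedge⟩
      obtain ⟨⟨hFunif, hFnoP⟩, hFcard⟩ := hF
      set g : ℕ → ℕ := fun v => π (f v) with hgdef
      have hgV : ∀ v ∈ F.1, g v ∈ V := by
        intro v hv
        by_cases h : f v = y
        · simp only [hgdef, hπdef, h, if_pos rfl]; exact hx
        · simp only [hgdef, hπdef, if_neg h]
          rcases Finset.mem_insert.mp (hfmap v hv) with h' | h'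
          · exact absurd h' h
          · exact h'
      have hgedge : ∀ e ∈ F.2, e.image g ∈ G := by
        intro e he
        have h2 := (key _ (hfedge e he)).2.2.2
        rw [Finset.image_image] at h2
        exact h2
      have hgmemF' : ∀ v ∈ F.1, g v ∈ F.1.image g := fun v hv => Finset.mem_image_of_mem g hv
      -- the folded graph F'
      refine hfree (F.1.image g, F.2.image fun e => e.image g) ⟨⟨?_, ?_⟩, ?_⟩
        ⟨id, fun a _ b _ h => h, ?_, ?_⟩
      · -- uniform
        rintro e' he'
        obtain ⟨e, he, rfl⟩ := Finset.mem_image.mp he'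
        exact ⟨Finset.image_subset_image (hFunif e he).1, (hG _ (hgedge e he)).2⟩
      · -- embeds into no P-construction
        rintro U H hUH ⟨φ, hφinj, hφmap, hφedge⟩
        by_cases hv0 : ∃ v ∈ F.1, f v = y
        · obtain ⟨v₀, hv₀F, hv₀⟩ := hv0
          have hguniq : ∀ u ∈ F.1, f u = y → u = v₀ := fun u hu h' =>
            hfinj hu hv₀F (h'.trans hv₀.symm)
          have hgv₀ : g v₀ = x := by simp [hgdef, hπdef, hv₀]
          have hxF' : x ∈ F.1.image g := hgv₀ ▸ hgmemF' v₀ hv₀F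
          obtain ⟨z, hz⟩ := Infinite.exists_notMem_finset U
          obtain ⟨H₂, hH₂, hsub⟩ := pcon_clone P (φ x) z hUH (hφmap x hxF') hz
          set ψ : ℕ → ℕ := fun v => if f v = y then z else φ (f v) with hψdef
          have hψne : ∀ v ∈ F.1, f v ≠ y → ψ v = φ (g v) := by
            intro v hv h
            simp only [hψdef, if_neg h, hgdef, hπdef]
          have hgfne : ∀ v, f v ≠ y → g v = f v := fun v h => by
            simp only [hgdef, hπdef, if_neg h]
          refine hFnoP (insert z U) H₂ hH₂ ⟨ψ, ?_, ?_, ?_⟩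
          · intro a ha b hb hab
            by_cases h1 : f a = y <;> by_cases h2 : f b = y
            · exact (hguniq a ha h1).trans (hguniq b hb h2).symm
            · exfalso
              rw [hψdef] at hab
              simp only [if_pos h1, if_neg h2] at hab
              exact hz (hab ▸ hφmap _ (hgfne b h2 ▸ hgmemF' b hb))
            · exfalso
              rw [hψdef] at hab
              simp only [if_neg h1, if_pos h2] at hab
              exact hz (hab.symm ▸ hφmap _ (hgfne a h1 ▸ hgmemF' a ha))
            · rw [hψdef] at hab
              simp only [if_neg h1, if_neg h2] at hab
              have := hφinj (hgfne a h1 ▸ hgmemF' a ha) (hgfne b h2 ▸ hgmemF' b hb) hab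
              exact hfinj ha hb this
          · intro v hv
            by_cases h : f v = y
            · simp only [hψdef, if_pos h]
              exact Finset.mem_insert_self _ _
            · simp only [hψdef, if_neg h]
              exact Finset.mem_insert_of_mem (hφmap _ (hgfne v h ▸ hgmemF' v hv))
          · intro e he
            have hsubF : e ⊆ F.1 := (hFunif e he).1
            have hE'' : (e.image g).image φ ∈ H :=
              hφedge _ (Finset.mem_image_of_mem _ he)
            by_cases hv₀e : v₀ ∈ e
            · -- need the cloned edge
              have hA : ∀ u ∈ e.erase v₀, f u ≠ y := fun u hu h' =>
                (Finset.mem_erase.mp hu).1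
                  (hguniq u (hsubF (Finset.mem_of_mem_erase hu)) h')
              have him1 : e.image ψ = insert z ((e.erase v₀).image fun u => φ (f u)) := by
                conv_lhs => rw [← Finset.insert_erase hv₀e]
                rw [Finset.image_insert]
                congr 1
                · simp [hψdef, hv₀]
                · exact Finset.image_congr fun u hu => by
                    simp only [hψdef, if_neg (hA u hu)]
              have him2 : (e.image g).image φ =
                  insert (φ x) ((e.erase v₀).image fun u => φ (f u)) := by
                conv_lhs => rw [← Finset.insert_erase hv₀e]
                rw [Finset.image_insert, hgv₀, Finset.image_insert, Finset.image_image]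
                congr 1
                exact Finset.image_congr fun u hu => by
                  simp only [Function.comp_apply, hgfne u (hA u hu)]
              have hnot : φ x ∉ (e.erase v₀).image fun u => φ (f u) := by
                rintro h
                obtain ⟨u, hu, hueq⟩ := Finset.mem_image.mp h
                have huF : u ∈ F.1 := hsubF (Finset.mem_of_mem_erase hu)
                have hfu : f u ≠ y := hA u hu
                have : f u = x :=
                  hφinj (hgfne u hfu ▸ hgmemF' u huF) hxF' hueq
                have hxin : x ∈ e.image f := this ▸ Finset.mem_image_of_mem f
                  (Finset.mem_of_mem_erase hu)
                have hyin : y ∈ e.image f := hv₀ ▸ Finset.mem_image_of_mem f hv₀e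
                exact (key _ (hfedge e he)).2.2.1 ⟨hxin, hyin⟩
              have hφxE : φ x ∈ (e.image g).image φ := by
                rw [him2]; exact Finset.mem_insert_self _ _
              have : e.image ψ = insert z (((e.image g).image φ).erase (φ x)) := by
                rw [him1, him2, Finset.erase_insert hnot]
              rw [this]
              exact hsub (Finset.mem_union_right _ (Finset.mem_image_of_mem _
                (Finset.mem_filter.mpr ⟨hE'', hφxE⟩)))
            · -- ordinary edge
              have : e.image ψ = (e.image g).image φ := by
                rw [Finset.image_image]
                exact Finset.image_congr fun u hu => by
                  have hfu : f u ≠ y := fun h' => hv₀e (hguniq u (hsubF hu) h' ▸ hu)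
                  simp only [hψdef, if_neg hfu, Function.comp_apply, hgfne u hfu]
              rw [this]
              exact hsub (Finset.mem_union_left _ hE'')
        · -- no vertex maps to y : F embeds into (U, H) directly
          push_neg at hv0
          have hgf : ∀ v ∈ F.1, g v = f v := fun v hv => by
            simp only [hgdef, hπdef, if_neg (hv0 v hv)]
          refine hFnoP U H hUH ⟨fun v => φ (f v), ?_, ?_, ?_⟩
          · intro a ha b hb hab
            have := hφinj (hgf a ha ▸ hgmemF' a ha) (hgf b hb ▸ hgmemF' b hb) hab
            exact hfinj ha hb this
          · intro v hv
            exact hφmap _ (hgf v hv ▸ hgmemF' v hv)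
          · intro e he
            have : e.image (fun v => φ (f v)) = (e.image g).image φ := by
              rw [Finset.image_image]
              exact Finset.image_congr fun u hu => by
                simp only [Function.comp_apply, hgf u ((hFunif e he).1 hu)]
            rw [this]
            exact hφedge _ (Finset.mem_image_of_mem _ he)
      · -- cardinality bound
        exact le_trans (Nat.cast_le.mpr Finset.card_image_le) hFcard
      · -- identity embedding of F' into (V, G) : vertices
        intro v hv
        obtain ⟨u, hu, rfl⟩ := Finset.mem_image.mp hv
        exact hgV u hu
      · -- identity embedding : edges
        intro e' he'
        obtain ⟨e, he, rfl⟩ := Finset.mem_image.mp he'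
        rw [Finset.image_id]
        exact hgedge e he

/-- For `s ∈ ℕ ∪ {∞}`, if a `k`-graph `G` is `𝓕_s`-free then every
blow-up of `G` is `𝓕_s`-free. -/
theorem blowup_of_free_is_free (k : ℕ) (hk : 0 < k) (P : Pattern k) (s : ℕ∞)
    (V : Finset ℕ) (G : Finset (Finset ℕ)) (hG : EdgesUniform k V G)
    (hfree : IsFree (FamBdd P s) V G)
    (W : Finset ℕ) (K : Finset (Finset ℕ)) (h : IsBlowupOf W K V G) :
    IsFree (FamBdd P s) W K := by
  suffices h' : ∀ q : Finset ℕ × Finset (Finset ℕ),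
      Relation.ReflTransGen BlowupStep (V, G) q →
      EdgesUniform k q.1 q.2 ∧ IsFree (FamBdd P s) q.1 q.2 by
    exact (h' (W, K) h).2
  intro q hq
  induction hq with
  | refl => exact ⟨hG, hfree⟩
  | tail _ hstep ih => exact step_preserve P s hstep ih.1 ih.2
end

section
/- Let P = (m,E,R) be a pattern of k-multisets and let s ∈ ℕ ∪ {∞}. Let G be a k-graph on a vertex set V = V_1 ∪ … ∪ V_m obtained by taking all edges of the blow-up E((V_1,…,V_m)) and placing an arbitrary F_s-free k-graph inside each part V_i with i ∈ R. Then G is F_s-free. -/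
open Filter Finset

variable {k : ℕ}

/-! ### Auxiliary lemmas: relabelling `P`-constructions along an injection. -/

lemma profileOf_image (P : Pattern k) (part : P.ι → Finset ℕ) (X : Finset ℕ)
    (ψ : ℕ → ℕ) (hψ : Function.Injective ψ) :
    profileOf P (fun i => (part i).image ψ) (X.image ψ) = profileOf P part X := by
  unfold profileOf
  refine Finset.sum_congr rfl fun i _ => ?_
  rw [← Finset.image_inter _ _ hψ, Finset.card_image_of_injective _ hψ]

lemma blowupEdges_image (P : Pattern k) (part : P.ι → Finset ℕ) (V : Finset ℕ)
    (ψ : ℕ → ℕ) (hψ : Function.Injective ψ) :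
    blowupEdges P (fun i => (part i).image ψ) (V.image ψ)
      = (blowupEdges P part V).image (Finset.image ψ) := by
  classical
  ext X
  simp only [blowupEdges, Finset.mem_filter, Finset.mem_powerset, Finset.mem_image]
  constructor
  · rintro ⟨hXsub, hXcard, hXprof⟩
    have hYX : (V.filter fun v => ψ v ∈ X).image ψ = X := by
      apply Finset.Subset.antisymm
      · intro x hx
        obtain ⟨v, hv, rfl⟩ := Finset.mem_image.mp hx
        exact (Finset.mem_filter.mp hv).2
      · intro x hx
        obtain ⟨v, hv, rfl⟩ := Finset.mem_image.mp (hXsub hx)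
        exact Finset.mem_image.mpr ⟨v, Finset.mem_filter.mpr ⟨hv, hx⟩, rfl⟩
    refine ⟨V.filter fun v => ψ v ∈ X, ⟨Finset.filter_subset _ _, ?_, ?_⟩, hYX⟩
    · rw [← Finset.card_image_of_injective _ hψ, hYX]; exact hXcard
    · rw [← profileOf_image P part _ ψ hψ, hYX]; exact hXprof
  · rintro ⟨Y, ⟨hYsub, hYcard, hYprof⟩, rfl⟩
    refine ⟨Finset.image_subset_image hYsub, ?_, ?_⟩
    · rw [Finset.card_image_of_injective _ hψ]; exact hYcard
    · rw [profileOf_image P part _ ψ hψ]; exact hYprof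

lemma IsPConstruction.relabel {P : Pattern k} {V : Finset ℕ} {G : Finset (Finset ℕ)}
    (h : IsPConstruction P V G) (ψ : ℕ → ℕ) (hψ : Function.Injective ψ) :
    IsPConstruction P (V.image ψ) (G.image (Finset.image ψ)) := by
  classical
  induction h with
  | empty V => simpa using IsPConstruction.empty (P := P) (V.image ψ)
  | step V part inner hcov hdis hne hrec h0 ih =>
    have hG : (blowupEdges P part V ∪ Finset.univ.biUnion inner).image (Finset.image ψ)
        = blowupEdges P (fun i => (part i).image ψ) (V.image ψ)
          ∪ Finset.univ.biUnion (fun i => (inner i).image (Finset.image ψ)) := by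
      rw [Finset.image_union, blowupEdges_image P part V ψ hψ, Finset.biUnion_image]
    rw [hG]
    refine IsPConstruction.step _ _ _ ?_ ?_ ?_ ?_ ?_
    · rw [← hcov, Finset.biUnion_image]
    · intro i j hij
      exact (Finset.disjoint_image hψ).mpr (hdis i j hij)
    · intro i hi heq
      exact hne i hi (Finset.image_injective hψ heq)
    · exact ih
    · intro i hi
      rw [h0 i hi, Finset.image_empty]

/-- For `s ∈ ℕ ∪ {∞}`: take the blow-up edges of a partition
`V = V₁ ∪ … ∪ V_m` and place an arbitrary `𝓕_s`-free `k`-graph inside each part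
`V_i` with `i ∈ R`; the resulting `k`-graph is `𝓕_s`-free. -/
theorem compound_graph_is_free (k : ℕ) (hk : 0 < k) (P : Pattern k) (s : ℕ∞)
    (V : Finset ℕ) (part : P.ι → Finset ℕ)
    (hcov : Finset.univ.biUnion part = V)
    (hdis : ∀ i j : P.ι, i ≠ j → Disjoint (part i) (part j))
    (hne : ∀ i ∈ P.R, part i ≠ V)
    (inner : P.ι → Finset (Finset ℕ))
    (hU : ∀ i ∈ P.R, EdgesUniform k (part i) (inner i))
    (hF : ∀ i ∈ P.R, IsFree (FamBdd P s) (part i) (inner i))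
    (h0 : ∀ i ∉ P.R, inner i = ∅) :
    IsFree (FamBdd P s) V (blowupEdges P part V ∪ Finset.univ.biUnion inner) := by
  classical
  rintro F ⟨⟨hFU, hFcon⟩, hFs⟩ ⟨f, hfin, hfV, hfE⟩
  rcases isEmpty_or_nonempty P.ι with hE | hNE
  · -- degenerate case: no indices, so `V = ∅` and `F` is the empty graph
    have hV : V = ∅ := by rw [← hcov]; simp
    have hF1 : F.1 = ∅ := by
      refine Finset.eq_empty_of_forall_notMem fun v hv => ?_
      have := hfV v hv
      rw [hV] at this
      exact Finset.notMem_empty _ this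
    have hF2 : F.2 = ∅ := by
      refine Finset.eq_empty_of_forall_notMem fun e he => ?_
      obtain ⟨hsub, hcard⟩ := hFU e he
      rw [hF1, Finset.subset_empty] at hsub
      subst hsub
      simp only [Finset.card_empty] at hcard
      omega
    exact hFcon ∅ ∅ (IsPConstruction.empty ∅)
      ⟨id, by simp [hF1], by simp [hF1], by simp [hF2]⟩
  · obtain ⟨j₀⟩ := hNE
    -- encodings used for relabelling the parts into disjoint blocks of ℕ
    set enc : P.ι → ℕ := fun j => ((Fintype.equivFin P.ι) j : ℕ) with henc
    have hencinj : Function.Injective enc := fun a b h =>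
      (Fintype.equivFin P.ι).injective (Fin.val_injective h)
    set ψ : P.ι → ℕ → ℕ := fun j v => Nat.pair (2 * enc j) v with hψdef
    set d : P.ι → ℕ := fun j => Nat.pair (2 * enc j + 1) 0 with hddef
    have hψinj : ∀ j, Function.Injective (ψ j) := by
      intro j a b h
      exact ((Nat.pair_eq_pair).mp h).2
    -- the index of (the image of) a vertex of F
    set idx : ℕ → P.ι := fun v => if h : ∃ j, f v ∈ part j then h.choose else j₀ with hidxdef
    have hidx : ∀ v ∈ F.1, f v ∈ part (idx v) := by
      intro v hv
      have hvV : f v ∈ V := hfV v hv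
      rw [← hcov] at hvV
      obtain ⟨j, _, hj⟩ := Finset.mem_biUnion.mp hvV
      have hex : ∃ j, f v ∈ part j := ⟨j, hj⟩
      simp only [hidxdef, dif_pos hex]
      exact hex.choose_spec
    have huniq : ∀ v ∈ F.1, ∀ l, f v ∈ part l → idx v = l := by
      intro v hv l hl
      by_contra hnel
      exact (Finset.disjoint_left.mp (hdis _ _ hnel)) (hidx v hv) hl
    -- vertices and edges of F carried into part j
    set S : P.ι → Finset ℕ := fun j => F.1.filter fun v => f v ∈ part j with hSdef
    set Fj : P.ι → Finset (Finset ℕ) := fun j => F.2.filter fun e => e.image f ∈ inner j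
      with hFjdef
    have hidxS : ∀ v ∈ F.1, v ∈ S (idx v) := fun v hv =>
      Finset.mem_filter.mpr ⟨hv, hidx v hv⟩
    have hSsub : ∀ j, S j ⊆ F.1 := fun j => Finset.filter_subset _ _
    have hFjS : ∀ j ∈ P.R, ∀ e ∈ Fj j, e ⊆ S j := by
      intro j hj e he
      obtain ⟨heF, hef⟩ := Finset.mem_filter.mp he
      intro v hv
      have hvF : v ∈ F.1 := (hFU e heF).1 hv
      have : f v ∈ e.image f := Finset.mem_image_of_mem f hv
      have : f v ∈ part j := (hU j hj (e.image f) hef).1 this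
      exact Finset.mem_filter.mpr ⟨hvF, this⟩
    -- each (S j, Fj j) embeds into some P-construction
    have key : ∀ j, ∃ W H, ∃ g : ℕ → ℕ, IsPConstruction P W H ∧ Set.InjOn g (S j) ∧
        (∀ v ∈ S j, g v ∈ W) ∧ (∀ e ∈ Fj j, e.image g ∈ H) := by
      intro j
      by_cases hj : j ∈ P.R
      · have hemb : Embeds (S j) (Fj j) (part j) (inner j) := by
          refine ⟨f, hfin.mono ?_, ?_, ?_⟩
          · exact_mod_cast Finset.coe_subset.mpr (hSsub j)
          · intro v hv; exact (Finset.mem_filter.mp hv).2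
          · intro e he; exact (Finset.mem_filter.mp he).2
        have hnot : (S j, Fj j) ∉ FamBdd P s := fun h => hF j hj _ h hemb
        by_contra hcon
        push_neg at hcon
        apply hnot
        refine ⟨⟨?_, ?_⟩, ?_⟩
        · intro e he
          exact ⟨hFjS j hj e he, (hFU e (Finset.mem_filter.mp he).1).2⟩
        · intro W H hWH hembW
          obtain ⟨g, hg1, hg2, hg3⟩ := hembW
          obtain ⟨e, he, hne'⟩ := hcon W H g hWH hg1 hg2
          exact hne' (hg3 e he)
        · calc ((S j).card : ℕ∞) ≤ (F.1.card : ℕ∞) := by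
                exact_mod_cast Nat.cast_le.mpr (Finset.card_le_card (hSsub j))
            _ ≤ s := hFs
      · refine ⟨S j, ∅, id, IsPConstruction.empty _, Set.injOn_id _, fun v hv => by simpa, ?_⟩
        intro e he
        have := (Finset.mem_filter.mp he).2
        rw [h0 j hj] at this
        exact absurd this (Finset.notMem_empty _)
    choose W H g hWH hgInj hgMem hgEdge using key
    -- the parts of the new P-construction (empty parts padded with a dummy vertex)
    set Q : P.ι → Finset ℕ := fun j => if (W j).Nonempty then (W j).image (ψ j) else {d j}
      with hQdef
    set inner' : P.ι → Finset (Finset ℕ) := fun j =>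
      if j ∈ P.R ∧ (W j).Nonempty then (H j).image (Finset.image (ψ j)) else ∅ with hIdef
    set V' : Finset ℕ := Finset.univ.biUnion Q with hV'def
    set φ : ℕ → ℕ := fun v => ψ (idx v) (g (idx v) v) with hφdef
    have hQne : ∀ j, (Q j).Nonempty := by
      intro j
      simp only [hQdef]
      by_cases h : (W j).Nonempty
      · rw [if_pos h]; exact h.image _
      · rw [if_neg h]; exact ⟨d j, Finset.mem_singleton_self _⟩
    -- membership in Q j determines the tag
    have hQtag : ∀ j x, x ∈ Q j → x.unpair.1 = 2 * enc j ∨ x.unpair.1 = 2 * enc j + 1 := by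
      intro j x hx
      simp only [hQdef] at hx
      by_cases h : (W j).Nonempty
      · rw [if_pos h] at hx
        obtain ⟨v, _, rfl⟩ := Finset.mem_image.mp hx
        left; simp [hψdef, Nat.unpair_pair]
      · rw [if_neg h] at hx
        rw [Finset.mem_singleton.mp hx]
        right; simp [hddef, Nat.unpair_pair]
    have hQdis : ∀ i j : P.ι, i ≠ j → Disjoint (Q i) (Q j) := by
      intro i j hij
      rw [Finset.disjoint_left]
      intro x hxi hxj
      have h1 := hQtag i x hxi
      have h2 := hQtag j x hxj
      have : enc i ≠ enc j := fun h => hij (hencinj h)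
      omega
    have hφQ : ∀ v ∈ F.1, φ v ∈ Q (idx v) := by
      intro v hv
      have hg : g (idx v) v ∈ W (idx v) := hgMem (idx v) v (hidxS v hv)
      have hW : (W (idx v)).Nonempty := ⟨_, hg⟩
      simp only [hQdef]
      rw [if_pos hW]
      exact Finset.mem_image_of_mem _ hg
    have hφidx : ∀ v ∈ F.1, ∀ l, φ v ∈ Q l → idx v = l := by
      intro v hv l hl
      by_contra hne'
      exact (Finset.disjoint_left.mp (hQdis _ _ hne')) (hφQ v hv) hl
    -- the new P-construction
    have hne' : ∀ j ∈ P.R, Q j ≠ V' := by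
      intro j hj heq
      have hex : ∃ l : P.ι, l ≠ j := by
        by_contra hc
        push_neg at hc
        apply hne j hj
        apply Finset.Subset.antisymm
        · rw [← hcov]; intro x hx; exact Finset.mem_biUnion.mpr ⟨j, Finset.mem_univ _, hx⟩
        · rw [← hcov]; intro x hx
          obtain ⟨i, _, hi⟩ := Finset.mem_biUnion.mp hx
          rwa [hc i] at hi
      obtain ⟨l, hl⟩ := hex
      obtain ⟨x, hx⟩ := hQne l
      have hxV : x ∈ V' := Finset.mem_biUnion.mpr ⟨l, Finset.mem_univ _, hx⟩
      rw [← heq] at hxV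
      exact (Finset.disjoint_left.mp (hQdis l j hl)) hx hxV
    have hconstr : IsPConstruction P V' (blowupEdges P Q V' ∪ Finset.univ.biUnion inner') := by
      refine IsPConstruction.step V' Q inner' rfl hQdis hne' ?_ ?_
      · intro j hj
        simp only [hQdef, hIdef]
        by_cases hWj : (W j).Nonempty
        · rw [if_pos hWj, if_pos (And.intro hj hWj)]
          exact (hWH j).relabel (ψ j) (hψinj j)
        · rw [if_neg hWj, if_neg (fun h : j ∈ P.R ∧ (W j).Nonempty => hWj h.2)]
          exact IsPConstruction.empty _
      · intro j hj
        simp only [hIdef]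
        exact if_neg (fun h => hj h.1)
    -- the embedding of F into the new construction
    have hφinj : Set.InjOn φ F.1 := by
      intro u hu v hv huv
      simp only [Finset.mem_coe] at hu hv
      rw [hφdef] at huv
      simp only [hψdef] at huv
      obtain ⟨h1, h2⟩ := Nat.pair_eq_pair.mp huv
      have hi : idx u = idx v := hencinj (by omega)
      rw [hi] at h2
      have hu' : u ∈ S (idx v) := hi ▸ hidxS u hu
      exact hgInj (idx v) hu' (hidxS v hv) h2
    have hφV : ∀ v ∈ F.1, φ v ∈ V' := fun v hv =>
      Finset.mem_biUnion.mpr ⟨idx v, Finset.mem_univ _, hφQ v hv⟩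
    have hφE : ∀ e ∈ F.2, e.image φ ∈ blowupEdges P Q V' ∪ Finset.univ.biUnion inner' := by
      intro e he
      have heF1 : e ⊆ F.1 := (hFU e he).1
      have hek : e.card = k := (hFU e he).2
      rcases Finset.mem_union.mp (hfE e he) with hbl | hin
      · -- blow-up edge: profiles are preserved
        refine Finset.mem_union_left _ ?_
        obtain ⟨hfsub, hfk, hfprof⟩ := Finset.mem_filter.mp hbl
        rw [Finset.mem_powerset] at hfsub
        refine Finset.mem_filter.mpr ⟨Finset.mem_powerset.mpr ?_, ?_, ?_⟩
        · intro x hx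
          obtain ⟨v, hv, rfl⟩ := Finset.mem_image.mp hx
          exact hφV v (heF1 hv)
        · rw [Finset.card_image_of_injOn (hφinj.mono (by exact_mod_cast heF1)), hek]
        · -- profile equality
          have hkey : ∀ l : P.ι, ((e.image φ) ∩ Q l).card = ((e.image f) ∩ part l).card := by
            intro l
            have h1 : (e.image φ) ∩ Q l = (e.filter fun v => f v ∈ part l).image φ := by
              ext x
              constructor
              · intro hx
                obtain ⟨hx1, hx2⟩ := Finset.mem_inter.mp hx
                obtain ⟨v, hv, rfl⟩ := Finset.mem_image.mp hx1
                have hil : idx v = l := hφidx v (heF1 hv) l hx2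
                refine Finset.mem_image.mpr ⟨v, Finset.mem_filter.mpr ⟨hv, ?_⟩, rfl⟩
                rw [← hil]; exact hidx v (heF1 hv)
              · intro hx
                obtain ⟨v, hv, rfl⟩ := Finset.mem_image.mp hx
                obtain ⟨hve, hvl⟩ := Finset.mem_filter.mp hv
                have hil : idx v = l := huniq v (heF1 hve) l hvl
                exact Finset.mem_inter.mpr ⟨Finset.mem_image_of_mem _ hve,
                  hil ▸ hφQ v (heF1 hve)⟩
            have h2 : (e.image f) ∩ part l = (e.filter fun v => f v ∈ part l).image f := by
              ext x
              constructor
              · intro hx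
                obtain ⟨hx1, hx2⟩ := Finset.mem_inter.mp hx
                obtain ⟨v, hv, rfl⟩ := Finset.mem_image.mp hx1
                exact Finset.mem_image.mpr ⟨v, Finset.mem_filter.mpr ⟨hv, hx2⟩, rfl⟩
              · intro hx
                obtain ⟨v, hv, rfl⟩ := Finset.mem_image.mp hx
                obtain ⟨hve, hvl⟩ := Finset.mem_filter.mp hv
                exact Finset.mem_inter.mpr ⟨Finset.mem_image_of_mem _ hve, hvl⟩
            rw [h1, h2]
            rw [Finset.card_image_of_injOn
              (hφinj.mono (by exact_mod_cast (Finset.filter_subset _ _).trans heF1))]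
            rw [Finset.card_image_of_injOn
              (hfin.mono (by exact_mod_cast (Finset.filter_subset _ _).trans heF1))]
          have hpe : profileOf P Q (e.image φ) = profileOf P part (e.image f) := by
            unfold profileOf
            exact Finset.sum_congr rfl fun l _ => by rw [hkey l]
          rw [hpe]
          exact hfprof
      · -- inner edge: use the chosen embedding g j
        obtain ⟨j, _, hj⟩ := Finset.mem_biUnion.mp hin
        have hjR : j ∈ P.R := by
          by_contra hjR
          rw [h0 j hjR] at hj
          exact Finset.notMem_empty _ hj
        have heFj : e ∈ Fj j := Finset.mem_filter.mpr ⟨he, hj⟩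
        have heS : e ⊆ S j := hFjS j hjR e heFj
        have hidxe : ∀ v ∈ e, idx v = j := fun v hv =>
          huniq v (heF1 hv) j (Finset.mem_filter.mp (heS hv)).2
        have hene : e.Nonempty := Finset.card_pos.mp (by omega)
        obtain ⟨v₀, hv₀⟩ := hene
        have hWj : (W j).Nonempty := ⟨g j v₀, hgMem j v₀ (heS hv₀)⟩
        refine Finset.mem_union_right _ (Finset.mem_biUnion.mpr ⟨j, Finset.mem_univ _, ?_⟩)
        simp only [hIdef]
        rw [if_pos (And.intro hjR hWj)]
        refine Finset.mem_image.mpr ⟨e.image (g j), hgEdge j e heFj, ?_⟩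
        rw [Finset.image_image]
        refine Finset.image_congr ?_
        intro v hv
        simp only [Function.comp_apply, hφdef, hidxe v hv]
    exact hFcon V' _ hconstr ⟨φ, hφinj, hφV, hφE⟩
end
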